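/- The coefficient a_M of A^{e(D)+2v(D)-2} in the Kauffman bracket expansion over spanning sub-dessins of D equals Σ (-1)^{v(D)+e(H)-1}, summed over spanning sub-dessins H with g(H)=0 and k(H)=v(D) (i.e., every edge of H is a loop). In particular, if D has no loops then a_M = (-1)^{v(D)-1}. -/

import Mathlib

open LaurentPolynomial

/-- The coefficient of `Aⁿ` in a Laurent polynomial in `A`. -/
def lcoeff (p : LaurentPolynomial ℤ) (n : ℤ) : ℤ := p.coeff n

lemma qpow_apply (m : ℕ) (d : ℤ) (hd : 2 * m ≤ d) :
    ((-T 2 - T (-2) : LaurentPolynomial ℤ) ^ m).coeff d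
      = if d = 2 * m then (-1) ^ m else 0 := by
  induction m generalizing d with
  | zero =>
      simp only [pow_zero, Nat.cast_zero, mul_zero]
      rw [show (1 : LaurentPolynomial ℤ) = T 0 from rfl, T_apply]
      simp [eq_comm]
  | succ n ih =>
      have h1 : ((-T 2 - T (-2) : LaurentPolynomial ℤ) ^ (n+1))
          = ((-T 2 - T (-2)) ^ n) * (-T 2) - ((-T 2 - T (-2)) ^ n) * T (-2) := by
        rw [← mul_sub, ← pow_succ]
      rw [h1]
      have hT2 : ((((-T 2 - T (-2)) ^ n) * T 2 : LaurentPolynomial ℤ)).coeff d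
          = ((-T 2 - T (-2) : LaurentPolynomial ℤ) ^ n).coeff (d - 2) := by
        have := AddMonoidAlgebra.coeff_mul_single_apply
          (((-T 2 - T (-2) : LaurentPolynomial ℤ) ^ n)) (1 : ℤ) (2 : ℤ) d
        simpa [sub_eq_add_neg] using this
      have hTm2 : ((((-T 2 - T (-2)) ^ n) * T (-2) : LaurentPolynomial ℤ)).coeff d
          = ((-T 2 - T (-2) : LaurentPolynomial ℤ) ^ n).coeff (d + 2) := by
        have := AddMonoidAlgebra.coeff_mul_single_apply
          (((-T 2 - T (-2) : LaurentPolynomial ℤ) ^ n)) (1 : ℤ) (-2 : ℤ) d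
        simpa [sub_neg_eq_add] using this
      have hsub : ((((-T 2 - T (-2)) ^ n) * (-T 2)
          - ((-T 2 - T (-2)) ^ n) * T (-2) : LaurentPolynomial ℤ)).coeff d
          = -(((((-T 2 - T (-2)) ^ n) * T 2 : LaurentPolynomial ℤ)).coeff d)
            - ((((-T 2 - T (-2)) ^ n) * T (-2) : LaurentPolynomial ℤ)).coeff d := by
        rw [mul_neg]
        rw [AddMonoidAlgebra.coeff_sub, Finsupp.sub_apply, AddMonoidAlgebra.coeff_neg, Finsupp.neg_apply]
      rw [hsub, hT2, hTm2]
      have hd' : (2 : ℤ) * n ≤ d - 2 := by push_cast at hd ⊢; omega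
      have hd'' : (2 : ℤ) * n ≤ d + 2 := by push_cast at hd ⊢; omega
      rw [ih _ hd', ih _ hd'']
      have : ¬ (d + 2 = 2 * n) := by push_cast at hd ⊢; omega
      rw [if_neg this]
      push_cast
      by_cases h : d = 2 * (n+1)
      · rw [if_pos (by omega), if_pos (by push_cast [h]; ring)]
        ring
      · rw [if_neg (by omega), if_neg (by push_cast at h ⊢; omega)]
        ring


/-- The coefficient `a_M` of `A^{e(D)+2v(D)-2}` in the Kauffman bracket
expansion `⟨P⟩ = Σ_{H⊆D} A^{e(D)-2e(H)} (-A²-A^{-2})^{f(H)-1}` over spanning sub-dessins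
of the all-`A` dessin `D` equals `Σ (-1)^{v(D)+e(H)-1}`, summed over spanning sub-dessins
`H` with `g(H) = 0` and `k(H) = v(D)` (i.e. every edge of `H` is a loop).  In particular,
if `D` contains no loops then `a_M = (-1)^{v(D)-1}`.

The dessin is modeled abstractly by its edge set `E`, vertex count `v`, and the component,
face and genus counts of spanning sub-dessins, obeying Euler's formula; `x` is a loop iff
the one-edge sub-dessin `{x}` still has `v` components, and "no loops" means each single
edge joins two distinct vertices, `k {x} = v - 1`. -/
theorem highest_coefficient_formula
    (E : Type) [Fintype E] [DecidableEq E] (v : ℕ) (hv : 1 ≤ v)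
    (k fc g : Finset E → ℕ)
    (hEuler : ∀ H : Finset E, (v : ℤ) - H.card + fc H = 2 * k H - 2 * g H)
    (hk1 : ∀ H : Finset E, 1 ≤ k H)
    (hkf : ∀ H : Finset E, k H ≤ fc H)
    (hkv : ∀ H : Finset E, k H ≤ v)
    (hkempty : k ∅ = v)
    (hconn : k Finset.univ = 1)
    (hmono : ∀ H₁ H₂ : Finset E, H₁ ⊆ H₂ → k H₂ ≤ k H₁) :
    lcoeff (∑ H : Finset E, T ((Fintype.card E : ℤ) - 2 * H.card) *
        (-T 2 - T (-2)) ^ (fc H - 1))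
      ((Fintype.card E : ℤ) + 2 * v - 2) =
    (∑ H ∈ Finset.univ.filter fun H : Finset E => g H = 0 ∧ k H = v,
        (-1 : ℤ) ^ (v + H.card - 1)) ∧
    ((∀ x : E, k {x} = v - 1) →
      lcoeff (∑ H : Finset E, T ((Fintype.card E : ℤ) - 2 * H.card) *
          (-T 2 - T (-2)) ^ (fc H - 1))
        ((Fintype.card E : ℤ) + 2 * v - 2) = (-1 : ℤ) ^ (v - 1)) := by
  classical
  set e := Fintype.card E with he
  have key : ∀ H : Finset E,
      ((T ((e:ℤ) - 2 * H.card) * (-T 2 - T (-2)) ^ (fc H - 1) : LaurentPolynomial ℤ)).coeff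
        ((e:ℤ) + 2*v - 2)
      = if g H = 0 ∧ k H = v then (-1:ℤ)^(v + H.card - 1) else 0 := by
    intro H
    have hfc1 : 1 ≤ fc H := le_trans (hk1 H) (hkf H)
    have heu := hEuler H
    have hkvH := hkv H
    have hmul : ((T ((e:ℤ) - 2 * H.card) * (-T 2 - T (-2)) ^ (fc H - 1) : LaurentPolynomial ℤ)).coeff
        ((e:ℤ) + 2*v - 2)
        = ((-T 2 - T (-2) : LaurentPolynomial ℤ) ^ (fc H - 1)).coeff (2*(v:ℤ) + 2*H.card - 2) := by
      calc ((T ((e:ℤ) - 2 * H.card) * (-T 2 - T (-2)) ^ (fc H - 1) : LaurentPolynomial ℤ)).coeff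
            ((e:ℤ) + 2*v - 2)
          = 1 * ((-T 2 - T (-2) : LaurentPolynomial ℤ) ^ (fc H - 1)).coeff
              (-((e:ℤ) - 2*H.card) + ((e:ℤ) + 2*v - 2)) :=
            AddMonoidAlgebra.coeff_single_mul_apply
              ((-T 2 - T (-2) : LaurentPolynomial ℤ) ^ (fc H - 1)) (1:ℤ) ((e:ℤ) - 2*H.card) ((e:ℤ) + 2*v - 2)
        _ = _ := by rw [one_mul,
              show -((e:ℤ) - 2*H.card) + ((e:ℤ) + 2*v - 2) = 2*(v:ℤ) + 2*H.card - 2 by ring]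
    rw [hmul]
    have hle : 2 * (((fc H - 1 : ℕ)) : ℤ) ≤ 2*(v:ℤ) + 2*H.card - 2 := by
      push_cast [Nat.cast_sub hfc1]
      omega
    rw [qpow_apply _ _ hle]
    by_cases hc : g H = 0 ∧ k H = v
    · have hfc : fc H = v + H.card := by
        obtain ⟨hg, hk⟩ := hc
        have : (g H : ℤ) = 0 := by exact_mod_cast hg
        omega
      have hx : (((fc H - 1 : ℕ)) : ℤ) = (v:ℤ) + H.card - 1 := by
        rw [hfc, Nat.cast_sub (by omega : 1 ≤ v + H.card)]
        push_cast; ring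
      rw [if_pos (by rw [hx]; ring), if_pos hc, hfc]
    · have hne : ¬ (2*(v:ℤ) + 2*H.card - 2 = 2 * ((fc H - 1 : ℕ) : ℤ)) := by
        rw [Nat.cast_sub hfc1]
        push_cast
        rcases Nat.lt_or_ge (g H) 1 with hg | hg
        · have hg0 : g H = 0 := by omega
          have hkne : k H ≠ v := fun h => hc ⟨hg0, h⟩
          have : (g H : ℤ) = 0 := by exact_mod_cast hg0
          have : (k H : ℤ) ≠ (v : ℤ) := by exact_mod_cast hkne
          omega
        · have : (1 : ℤ) ≤ g H := by exact_mod_cast hg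
          omega
      rw [if_neg hne, if_neg hc]
  have main : lcoeff (∑ H : Finset E, T ((e : ℤ) - 2 * H.card) *
        (-T 2 - T (-2)) ^ (fc H - 1)) ((e : ℤ) + 2 * v - 2) =
      ∑ H ∈ Finset.univ.filter fun H : Finset E => g H = 0 ∧ k H = v,
        (-1 : ℤ) ^ (v + H.card - 1) := by
    unfold lcoeff
    rw [AddMonoidAlgebra.coeff_sum, Finsupp.finset_sum_apply, Finset.sum_filter]
    exact Finset.sum_congr rfl fun H _ => key H
  refine ⟨main, fun hloop => ?_⟩
  rw [main]
  have hfilter : (Finset.univ.filter fun H : Finset E => g H = 0 ∧ k H = v) = {∅} := by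
    ext H
    simp only [Finset.mem_filter, Finset.mem_univ, true_and, Finset.mem_singleton]
    constructor
    · rintro ⟨hg, hk⟩
      by_contra hne
      obtain ⟨x, hx⟩ := Finset.nonempty_iff_ne_empty.mpr hne
      have h1 : k H ≤ k {x} := hmono _ _ (Finset.singleton_subset_iff.mpr hx)
      rw [hloop x] at h1
      omega
    · rintro rfl
      have heu := hEuler ∅
      have hkf0 := hkf ∅
      simp only [Finset.card_empty, Nat.cast_zero] at heu
      rw [hkempty] at heu hkf0
      constructor
      · have : (g ∅ : ℤ) ≤ 0 := by
          have : (v : ℤ) ≤ fc ∅ := by exact_mod_cast hkf0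
          omega
        exact_mod_cast le_antisymm (by exact_mod_cast this) (Nat.zero_le _)
      · exact hkempty
  rw [hfilter]
  simp
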